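/- With 𝓛 the Hedlund family of lines, the closed 1/100-neighborhoods of any two distinct lines of 𝓛 are at distance at least 1/5 from each other. -/

import Mathlib

noncomputable section

def ell1 : Set (EuclideanSpace ℝ (Fin 3)) := {x | x 1 = 0 ∧ x 2 = 0}
def ell2 : Set (EuclideanSpace ℝ (Fin 3)) := {x | x 0 = 0 ∧ x 2 = 1 / 4}
def ell3 : Set (EuclideanSpace ℝ (Fin 3)) := {x | x 0 = 1 / 4 ∧ x 1 = 1 / 4}

/-- The Hedlund family of lines: all `ℤ³`-translates of `ℓ₁, ℓ₂, ℓ₃`. -/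
def hedlund : Set (Set (EuclideanSpace ℝ (Fin 3))) :=
  {S | ∃ k : Fin 3 → ℤ,
    S = (fun x => x + (WithLp.toLp 2 (fun j => (k j : ℝ)) : EuclideanSpace ℝ (Fin 3))) '' ell1 ∨
    S = (fun x => x + (WithLp.toLp 2 (fun j => (k j : ℝ)) : EuclideanSpace ℝ (Fin 3))) '' ell2 ∨
    S = (fun x => x + (WithLp.toLp 2 (fun j => (k j : ℝ)) : EuclideanSpace ℝ (Fin 3))) '' ell3}

lemma img1 (k : Fin 3 → ℤ) :
    (fun x => x + (WithLp.toLp 2 (fun j => (k j : ℝ)) : EuclideanSpace ℝ (Fin 3))) '' ell1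
      = {x : EuclideanSpace ℝ (Fin 3) | x 1 = (k 1 : ℝ) ∧ x 2 = (k 2 : ℝ)} := by
  ext p
  simp only [Set.mem_image, ell1, Set.mem_setOf_eq]
  constructor
  · rintro ⟨y, ⟨h1, h2⟩, rfl⟩
    constructor <;> simp [PiLp.add_apply, h1, h2] <;> try ring
  · rintro ⟨h1, h2⟩
    exact ⟨p - WithLp.toLp 2 (fun j => (k j : ℝ)), ⟨by simp [PiLp.sub_apply, h1], by simp [PiLp.sub_apply, h2]⟩,
      by simp⟩

lemma img2 (k : Fin 3 → ℤ) :
    (fun x => x + (WithLp.toLp 2 (fun j => (k j : ℝ)) : EuclideanSpace ℝ (Fin 3))) '' ell2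
      = {x : EuclideanSpace ℝ (Fin 3) | x 0 = (k 0 : ℝ) ∧ x 2 = (k 2 : ℝ) + 1/4} := by
  ext p
  simp only [Set.mem_image, ell2, Set.mem_setOf_eq]
  constructor
  · rintro ⟨y, ⟨h1, h2⟩, rfl⟩
    constructor <;> simp [PiLp.add_apply, h1, h2] <;> try ring
  · rintro ⟨h1, h2⟩
    exact ⟨p - WithLp.toLp 2 (fun j => (k j : ℝ)), ⟨by simp [PiLp.sub_apply, h1],
      by simp [PiLp.sub_apply, h2]; try ring⟩, by simp⟩

lemma img3 (k : Fin 3 → ℤ) :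
    (fun x => x + (WithLp.toLp 2 (fun j => (k j : ℝ)) : EuclideanSpace ℝ (Fin 3))) '' ell3
      = {x : EuclideanSpace ℝ (Fin 3) | x 0 = (k 0 : ℝ) + 1/4 ∧ x 1 = (k 1 : ℝ) + 1/4} := by
  ext p
  simp only [Set.mem_image, ell3, Set.mem_setOf_eq]
  constructor
  · rintro ⟨y, ⟨h1, h2⟩, rfl⟩
    constructor <;> simp [PiLp.add_apply, h1, h2] <;> try ring
  · rintro ⟨h1, h2⟩
    exact ⟨p - WithLp.toLp 2 (fun j => (k j : ℝ)), ⟨by simp [PiLp.sub_apply, h1]; try ring,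
      by simp [PiLp.sub_apply, h2]; try ring⟩, by simp⟩

lemma pair_nonempty (i j : Fin 3) (h : i ≠ j) (a b : ℝ) :
    ({x : EuclideanSpace ℝ (Fin 3) | x i = a ∧ x j = b}).Nonempty := by
  refine ⟨(WithLp.toLp 2 (fun t => if t = i then a else if t = j then b else 0) :
    EuclideanSpace ℝ (Fin 3)), ?_, ?_⟩ <;> simp [Ne.symm h]

lemma coord_abs_le_dist (x y : EuclideanSpace ℝ (Fin 3)) (i : Fin 3) :
    |x i - y i| ≤ dist x y := by
  rw [EuclideanSpace.dist_eq]
  have hsum : dist (x i) (y i) ^ 2 ≤ ∑ j, dist (x j) (y j) ^ 2 :=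
    Finset.single_le_sum (f := fun j => dist (x j) (y j) ^ 2)
      (fun _ _ => sq_nonneg _) (Finset.mem_univ i)
  calc |x i - y i| = Real.sqrt (dist (x i) (y i) ^ 2) := by
        rw [Real.sqrt_sq dist_nonneg, Real.dist_eq]
    _ ≤ _ := Real.sqrt_le_sqrt hsum

lemma int_ne (a b : ℤ) (h : (a : ℝ) ≠ (b : ℝ)) : (1/4 : ℝ) ≤ |(a : ℝ) - b| := by
  have hab : a ≠ b := fun e => h (by rw [e])
  have : (1 : ℤ) ≤ |a - b| := Int.one_le_abs (sub_ne_zero.mpr hab)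
  have h1 : (1 : ℝ) ≤ |(a : ℝ) - b| := by exact_mod_cast this
  linarith

lemma quarter (a b : ℤ) : (1/4 : ℝ) ≤ |(a : ℝ) - ((b : ℝ) + 1/4)| := by
  rcases le_or_gt a b with h | h
  · have : (a : ℝ) ≤ b := Int.cast_le.mpr h
    rw [abs_of_nonpos (by linarith)]; linarith
  · have : (b : ℝ) + 1 ≤ a := by exact_mod_cast Int.add_one_le_iff.mpr h
    rw [abs_of_nonneg (by linarith)]; linarith

lemma quarter' (a b : ℤ) : (1/4 : ℝ) ≤ |((a : ℝ) + 1/4) - (b : ℝ)| := by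
  rw [abs_sub_comm]; exact quarter b a

lemma key {S T : Set (EuclideanSpace ℝ (Fin 3))} {i : Fin 3} {a b : ℝ}
    (hSne : S.Nonempty) (hTne : T.Nonempty)
    (hSa : ∀ p ∈ S, p i = a) (hTb : ∀ q ∈ T, q i = b)
    (hab : 1/4 ≤ |a - b|) :
    ∀ x y : EuclideanSpace ℝ (Fin 3),
      Metric.infDist x S ≤ 1 / 100 → Metric.infDist y T ≤ 1 / 100 →
        (1 / 5 : ℝ) ≤ dist x y := by
  intro x y hx hy
  have hxa : |x i - a| ≤ 1/100 := by
    by_contra hcon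
    push_neg at hcon
    obtain ⟨p, hp, hlt⟩ := (Metric.infDist_lt_iff hSne).1 (lt_of_le_of_lt hx hcon)
    have h2 := coord_abs_le_dist x p i
    rw [hSa p hp] at h2
    linarith
  have hyb : |y i - b| ≤ 1/100 := by
    by_contra hcon
    push_neg at hcon
    obtain ⟨q, hq, hlt⟩ := (Metric.infDist_lt_iff hTne).1 (lt_of_le_of_lt hy hcon)
    have h2 := coord_abs_le_dist y q i
    rw [hTb q hq] at h2
    linarith
  have h1 : |x i - y i| ≤ dist x y := coord_abs_le_dist x y i
  have t1 : |a - b| ≤ |a - x i| + |x i - b| := abs_sub_le _ _ _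
  have t2 : |x i - b| ≤ |x i - y i| + |y i - b| := abs_sub_le _ _ _
  have t3 : |a - x i| = |x i - a| := abs_sub_comm _ _
  linarith

theorem stmt_6 (S T : Set (EuclideanSpace ℝ (Fin 3)))
    (hS : S ∈ hedlund) (hT : T ∈ hedlund) (hne : S ≠ T) :
    ∀ x y : EuclideanSpace ℝ (Fin 3),
      Metric.infDist x S ≤ 1 / 100 → Metric.infDist y T ≤ 1 / 100 →
        (1 / 5 : ℝ) ≤ dist x y := by
  obtain ⟨k, hS⟩ := hS
  obtain ⟨m, hT⟩ := hT
  rcases hS with eS | eS | eS <;> rcases hT with eT | eT | eT <;> subst eS <;> subst eT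
  · -- ℓ1 vs ℓ1
    rw [img1 k, img1 m] at *
    by_cases hc : (k 1 : ℝ) = (m 1 : ℝ)
    · have hc2 : (k 2 : ℝ) ≠ (m 2 : ℝ) := by
        intro h2; exact hne (by rw [hc, h2])
      exact key (pair_nonempty 1 2 (by decide) _ _) (pair_nonempty 1 2 (by decide) _ _)
        (fun p hp => hp.2) (fun q hq => hq.2) (int_ne _ _ hc2)
    · exact key (pair_nonempty 1 2 (by decide) _ _) (pair_nonempty 1 2 (by decide) _ _)
        (fun p hp => hp.1) (fun q hq => hq.1) (int_ne _ _ hc)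
  · -- ℓ1 vs ℓ2 : coordinate 2
    rw [img1 k, img2 m] at *
    exact key (pair_nonempty 1 2 (by decide) _ _) (pair_nonempty 0 2 (by decide) _ _)
      (fun p hp => hp.2) (fun q hq => hq.2) (quarter _ _)
  · -- ℓ1 vs ℓ3 : coordinate 1
    rw [img1 k, img3 m] at *
    exact key (pair_nonempty 1 2 (by decide) _ _) (pair_nonempty 0 1 (by decide) _ _)
      (fun p hp => hp.1) (fun q hq => hq.2) (quarter _ _)
  · -- ℓ2 vs ℓ1 : coordinate 2
    rw [img2 k, img1 m] at *
    exact key (pair_nonempty 0 2 (by decide) _ _) (pair_nonempty 1 2 (by decide) _ _)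
      (fun p hp => hp.2) (fun q hq => hq.2) (quarter' _ _)
  · -- ℓ2 vs ℓ2
    rw [img2 k, img2 m] at *
    by_cases hc : (k 0 : ℝ) = (m 0 : ℝ)
    · have hc2 : (k 2 : ℝ) ≠ (m 2 : ℝ) := by
        intro h2; exact hne (by rw [hc, h2])
      refine key (pair_nonempty 0 2 (by decide) _ _) (pair_nonempty 0 2 (by decide) _ _)
        (fun p hp => hp.2) (fun q hq => hq.2) ?_
      have : ((k 2 : ℝ) + 1/4) - ((m 2 : ℝ) + 1/4) = (k 2 : ℝ) - (m 2 : ℝ) := by ring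
      rw [this]; exact int_ne _ _ hc2
    · exact key (pair_nonempty 0 2 (by decide) _ _) (pair_nonempty 0 2 (by decide) _ _)
        (fun p hp => hp.1) (fun q hq => hq.1) (int_ne _ _ hc)
  · -- ℓ2 vs ℓ3 : coordinate 0
    rw [img2 k, img3 m] at *
    exact key (pair_nonempty 0 2 (by decide) _ _) (pair_nonempty 0 1 (by decide) _ _)
      (fun p hp => hp.1) (fun q hq => hq.1) (quarter _ _)
  · -- ℓ3 vs ℓ1 : coordinate 1
    rw [img3 k, img1 m] at *
    exact key (pair_nonempty 0 1 (by decide) _ _) (pair_nonempty 1 2 (by decide) _ _)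
      (fun p hp => hp.2) (fun q hq => hq.1) (quarter' _ _)
  · -- ℓ3 vs ℓ2 : coordinate 0
    rw [img3 k, img2 m] at *
    exact key (pair_nonempty 0 1 (by decide) _ _) (pair_nonempty 0 2 (by decide) _ _)
      (fun p hp => hp.1) (fun q hq => hq.1) (quarter' _ _)
  · -- ℓ3 vs ℓ3
    rw [img3 k, img3 m] at *
    by_cases hc : (k 0 : ℝ) = (m 0 : ℝ)
    · have hc2 : (k 1 : ℝ) ≠ (m 1 : ℝ) := by
        intro h2; exact hne (by rw [hc, h2])
      refine key (pair_nonempty 0 1 (by decide) _ _) (pair_nonempty 0 1 (by decide) _ _)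
        (fun p hp => hp.2) (fun q hq => hq.2) ?_
      have : ((k 1 : ℝ) + 1/4) - ((m 1 : ℝ) + 1/4) = (k 1 : ℝ) - (m 1 : ℝ) := by ring
      rw [this]; exact int_ne _ _ hc2
    · refine key (pair_nonempty 0 1 (by decide) _ _) (pair_nonempty 0 1 (by decide) _ _)
        (fun p hp => hp.1) (fun q hq => hq.1) ?_
      have : ((k 0 : ℝ) + 1/4) - ((m 0 : ℝ) + 1/4) = (k 0 : ℝ) - (m 0 : ℝ) := by ring
      rw [this]; exact int_ne _ _ hc
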